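/- For any μ ∈ (0, 1/2] there exists f_μ > 0 such that for all 0 < f < f_μ and all θ ∈ ℝ, the polynomial g_θ(r) = 2r³ + 2r - 4(1-2μ)r² cosθ - f(r² - 2r cosθ + 1)(r² + 2r cosθ + 1) has exactly two real roots, both of which are positive. -/
import Mathlib

set_option maxHeartbeats 1000000


/-- The quartic `g_θ(r) = 2r³ + 2r - 4(1-2μ)r²cosθ - f(r² - 2r cosθ + 1)(r² + 2r cosθ + 1)`. -/
noncomputable def gQuartic (μ f θ r : ℝ) : ℝ :=
  2*r^3 + 2*r - 4*(1-2*μ)*r^2*Real.cos θ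
    - f*(r^2 - 2*r*Real.cos θ + 1)*(r^2 + 2*r*Real.cos θ + 1)

/-- For any `μ ∈ (0, 1/2]` there exists `f_μ > 0` such that for all `0 < f < f_μ` and all
`θ`, the polynomial `g_θ` has exactly two real roots, both positive. -/
theorem gQuartic_two_positive_roots (μ : ℝ) (hμ0 : 0 < μ) (hμ : μ ≤ 1/2) :
    ∃ fμ : ℝ, 0 < fμ ∧ ∀ f : ℝ, 0 < f → f < fμ → ∀ θ : ℝ,
      ∃ r₁ r₂ : ℝ, 0 < r₁ ∧ 0 < r₂ ∧ r₁ ≠ r₂ ∧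
        gQuartic μ f θ r₁ = 0 ∧ gQuartic μ f θ r₂ = 0 ∧
        ∀ r : ℝ, gQuartic μ f θ r = 0 → r = r₁ ∨ r = r₂ := by
  refine ⟨μ, hμ0, ?_⟩
  intro f hf hfμ θ
  have hf2 : f < 1/2 := lt_of_lt_of_le hfμ hμ
  have hc1 : Real.cos θ ≤ 1 := Real.cos_le_one θ
  have hc2 : -1 ≤ Real.cos θ := Real.neg_one_le_cos θ
  have hcsq : Real.cos θ ^ 2 ≤ 1 := by nlinarith
  have hμ' : 0 ≤ 1 - 2*μ := by linarith
  -- ψ(2) > 0 where ψ(s) = -f s² + 2 s + b, b = 4 f cos²θ - 4(1-2μ) cosθ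
  have hψ2 : 0 < -4*f + 4 + (4*f*Real.cos θ^2 - 4*(1-2*μ)*Real.cos θ) := by
    nlinarith [mul_nonneg hμ' (by linarith : (0:ℝ) ≤ 1 - Real.cos θ),
      mul_nonneg hf.le (sq_nonneg (Real.cos θ))]
  have hDpos : 0 < 1 + f*(4*f*Real.cos θ^2 - 4*(1-2*μ)*Real.cos θ) := by
    nlinarith [mul_pos hf hψ2, sq_nonneg (1-2*f)]
  set d : ℝ := Real.sqrt (1 + f*(4*f*Real.cos θ^2 - 4*(1-2*μ)*Real.cos θ)) with hd
  have hd0 : 0 ≤ d := Real.sqrt_nonneg _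
  have hdsq : d^2 = 1 + f*(4*f*Real.cos θ^2 - 4*(1-2*μ)*Real.cos θ) :=
    Real.sq_sqrt hDpos.le
  set s : ℝ := (1 + d)/f with hs
  have hfs : f * s = 1 + d := by rw [hs]; field_simp
  have h0 : f * (f*s^2 - 2*s - (4*f*Real.cos θ^2 - 4*(1-2*μ)*Real.cos θ)) = 0 := by
    linear_combination (f*s - 1 + d) * hfs + hdsq
  have hseq : f*s^2 - 2*s - (4*f*Real.cos θ^2 - 4*(1-2*μ)*Real.cos θ) = 0 :=
    (mul_eq_zero.mp h0).resolve_left hf.ne'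
  have hs2 : 2 < s := by
    have h1 : f*2 < f*s := by rw [hfs]; linarith
    exact lt_of_mul_lt_mul_left h1 hf.le
  have hE : 0 < s^2 - 4 := by nlinarith
  set e : ℝ := Real.sqrt (s^2 - 4) with he
  have he0 : 0 < e := Real.sqrt_pos.mpr hE
  have he2 : e^2 = s^2 - 4 := Real.sq_sqrt hE.le
  have helt : e < s := by nlinarith
  -- key identity: if t*r = r²+1 then g(r) = -r²·ψ(t)
  have key : ∀ r t : ℝ, t*r = r^2+1 →
      gQuartic μ f θ r = -(r^2*(f*t^2 - 2*t -
        (4*f*Real.cos θ^2 - 4*(1-2*μ)*Real.cos θ))) := by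
    intro r t h
    simp only [gQuartic]
    linear_combination (f*(t*r+r^2+1) - 2*r) * h
  refine ⟨(s+e)/2, (s-e)/2, by linarith, by linarith, by intro h; nlinarith, ?_, ?_, ?_⟩
  · have h1 : s*((s+e)/2) = ((s+e)/2)^2 + 1 := by linear_combination -he2/4
    rw [key _ s h1, hseq]; ring
  · have h1 : s*((s-e)/2) = ((s-e)/2)^2 + 1 := by linear_combination -he2/4
    rw [key _ s h1, hseq]; ring
  · intro r hgr
    -- every root is positive
    have hrpos : 0 < r := by
      by_contra hr
      push_neg at hr
      simp only [gQuartic] at hgr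
      rcases hr.eq_or_lt with rfl | hr0
      · norm_num at hgr; nlinarith
      · have h2 : 0 < r^2 := by nlinarith [mul_pos_of_neg_of_neg hr0 hr0]
        nlinarith [mul_pos hμ0 h2,
          mul_nonneg (neg_nonneg.mpr hr0.le) (sq_nonneg (r+1)),
          mul_nonneg (mul_nonneg hμ' (by linarith : (0:ℝ) ≤ 1 + Real.cos θ)) (sq_nonneg r),
          mul_nonneg hf.le (sq_nonneg (r^2-1)),
          mul_nonneg (mul_nonneg hf.le h2.le) (by nlinarith : (0:ℝ) ≤ 1 - Real.cos θ^2)]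
    set t : ℝ := (r^2+1)/r with htdef
    have ht : t*r = r^2+1 := by rw [htdef]; field_simp
    have ht2 : 2 ≤ t := by nlinarith [sq_nonneg (r-1)]
    have hteq : f*t^2 - 2*t - (4*f*Real.cos θ^2 - 4*(1-2*μ)*Real.cos θ) = 0 := by
      have h1 := key r t ht
      rw [hgr] at h1
      have h2 : r^2 * (f*t^2 - 2*t - (4*f*Real.cos θ^2 - 4*(1-2*μ)*Real.cos θ)) = 0 := by
        linarith
      exact (mul_eq_zero.mp h2).resolve_left (pow_ne_zero 2 hrpos.ne')
    have hftsq : (f*t - 1)^2 = 1 + f*(4*f*Real.cos θ^2 - 4*(1-2*μ)*Real.cos θ) := by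
      linear_combination f*hteq
    have h2 : (f*t - 1 - d)*(f*t - 1 + d) = 0 := by
      linear_combination hftsq - hdsq
    rcases mul_eq_zero.mp h2 with h3 | h3
    · -- t = s, so r is one of the two roots
      have hts : t = s := mul_left_cancel₀ hf.ne' (by linarith [hfs] : f*t = f*s)
      rw [hts] at ht
      have h4 : (r - (s+e)/2)*(r - (s-e)/2) = 0 := by
        linear_combination -ht - he2/4
      rcases mul_eq_zero.mp h4 with h5 | h5
      · exact Or.inl (by linarith)
      · exact Or.inr (by linarith)
    · -- impossible branch: f t = 1 - d
      exfalso
      have hdd : (1 - f*t)^2 = 1 + f*(4*f*Real.cos θ^2 - 4*(1-2*μ)*Real.cos θ) := by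
        have : d = 1 - f*t := by linarith
        rw [← this]; exact hdsq
      have hft1 : f*t ≤ 1 := by nlinarith
      have hP1 : 0 ≤ (f*(t-2)) * (2 - f*t - 2*f) :=
        mul_nonneg (mul_nonneg hf.le (by linarith)) (by linarith)
      nlinarith [mul_pos hf hψ2]
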